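/- Let K be a tensor of order T with K_{i_1,...,i_T} = Π_{t=1}^T k^t_{i_t} · Π_{t=1}^{T-1} k̂_{i_t, i_{t+1}} for vectors k^t and matrices k̂ with nonnegative entries, and let u^t be positive vectors. Define the scaled tensor M_{i_1,...,i_T} = K_{i_1,...,i_T} · Π_t u^t_{i_t}. Then for each τ, the τ-th marginal P_τ(M)_{i_τ} := Σ_{i_1,...,i_T except i_τ} M_{i_1,...,i_T} factorizes as P_τ(M)_{i_τ} = Φ→^τ_{i_τ} · k^τ_{i_τ} · u^τ_{i_τ} · Φ←^τ_{i_τ}, where Φ→^1 ≡ 1, Φ→^τ_{i} = Σ_j Φ→^{τ−1}_j · k^{τ−1}_j · k̂_{j,i} · u^{τ−1}_j, and Φ←^T ≡ 1, Φ←^τ_{i} = Σ_j Φ←^{τ+1}_j · k^{τ+1}_j · k̂_{i,j} · u^{τ+1}_j. -/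

import Mathlib

open Finset

section PSM_aux

variable {ι : Type*} [Fintype ι] [DecidableEq ι] {T : ℕ}

/-- forward part: weights and links strictly before `τ`. -/
private def PSM_A (W : Fin (T+1) → ι → ℝ) (khat : ι → ι → ℝ) (τ : Fin (T+1))
    (x : Fin (T+1) → ι) : ℝ :=
  (∏ t ∈ univ.filter (fun t : Fin (T+1) => t < τ), W t (x t)) *
  ∏ t ∈ univ.filter (fun t : Fin T => t.castSucc < τ), khat (x t.castSucc) (x t.succ)

/-- backward part: weights strictly after `τ` and links at or after `τ`. -/
private def PSM_B (W : Fin (T+1) → ι → ℝ) (khat : ι → ι → ℝ) (τ : Fin (T+1))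
    (x : Fin (T+1) → ι) : ℝ :=
  (∏ t ∈ univ.filter (fun t : Fin (T+1) => τ < t), W t (x t)) *
  ∏ t ∈ univ.filter (fun t : Fin T => τ ≤ t.castSucc), khat (x t.castSucc) (x t.succ)

private lemma PSM_B_congr (W : Fin (T+1) → ι → ℝ) (khat : ι → ι → ℝ) (τ : Fin (T+1))
    {x x' : Fin (T+1) → ι} (h : ∀ s, τ ≤ s → x s = x' s) :
    PSM_B W khat τ x = PSM_B W khat τ x' := by
  unfold PSM_B
  congr 1
  · refine prod_congr rfl fun t ht => ?_
    rw [h t (le_of_lt (mem_filter.mp ht).2)]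
  · refine prod_congr rfl fun t ht => ?_
    have h1 : τ ≤ t.castSucc := (mem_filter.mp ht).2
    rw [h _ h1, h _ (le_of_lt (lt_of_le_of_lt h1 (Fin.castSucc_lt_succ : t.castSucc < t.succ)))]

private lemma PSM_fwd (W : Fin (T+1) → ι → ℝ) (khat : ι → ι → ℝ)
    (Φf : Fin (T+1) → ι → ℝ) (hΦf0 : ∀ i, Φf 0 i = 1)
    (hΦf : ∀ t : Fin T, ∀ i,
      Φf t.succ i = ∑ j, Φf t.castSucc j * W t.castSucc j * khat j i) :
    ∀ τ : Fin (T+1), ∀ (i : ι) (y : Fin (T+1) → ι),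
      (∑ x ∈ univ.filter
          (fun x : Fin (T+1) → ι => x τ = i ∧ ∀ s, τ < s → x s = y s),
        PSM_A W khat τ x) = Φf τ i := by
  intro τ
  induction τ using Fin.induction with
  | zero =>
    intro i y
    have hset : univ.filter
        (fun x : Fin (T+1) → ι => x 0 = i ∧ ∀ s, 0 < s → x s = y s)
        = {Function.update y 0 i} := by
      ext x
      simp only [mem_filter, mem_univ, true_and, mem_singleton]
      constructor
      · rintro ⟨h0, hs⟩
        funext s
        rcases eq_or_ne s 0 with rfl | hne
        · rw [Function.update_self]; exact h0
        · rw [Function.update_of_ne hne]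
          exact hs s (Fin.pos_of_ne_zero hne)
      · rintro rfl
        refine ⟨Function.update_self _ _ _, fun s hs => ?_⟩
        rw [Function.update_of_ne hs.ne']
    rw [hset, sum_singleton, hΦf0]
    have h1 : univ.filter (fun t : Fin (T+1) => t < 0) = ∅ := by
      ext t; simp [Fin.lt_def]
    have h2 : univ.filter (fun t : Fin T => t.castSucc < 0) = ∅ := by
      ext t; simp [Fin.lt_def]
    rw [PSM_A, h1, h2, prod_empty, prod_empty, mul_one]
  | succ t ih =>
    intro i y
    have hA : ∀ x : Fin (T+1) → ι, PSM_A W khat t.succ x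
        = PSM_A W khat t.castSucc x *
          (W t.castSucc (x t.castSucc) * khat (x t.castSucc) (x t.succ)) := by
      intro x
      have e1 : univ.filter (fun s : Fin (T+1) => s < t.succ)
          = insert t.castSucc (univ.filter (fun s : Fin (T+1) => s < t.castSucc)) := by
        ext s
        simp only [mem_filter, mem_univ, true_and, mem_insert, Fin.lt_def, Fin.ext_iff,
          Fin.coe_castSucc, Fin.val_succ]
        omega
      have e2 : univ.filter (fun s : Fin T => s.castSucc < t.succ)
          = insert t (univ.filter (fun s : Fin T => s.castSucc < t.castSucc)) := by
        ext s
        simp only [mem_filter, mem_univ, true_and, mem_insert, Fin.lt_def, Fin.ext_iff,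
          Fin.coe_castSucc, Fin.val_succ]
        omega
      have h1 : t.castSucc ∉ univ.filter (fun s : Fin (T+1) => s < t.castSucc) := by
        simp
      have h2 : t ∉ univ.filter (fun s : Fin T => s.castSucc < t.castSucc) := by
        simp
      rw [PSM_A, PSM_A, e1, e2, prod_insert h1, prod_insert h2]
      ring
    rw [← Finset.sum_fiberwise_of_maps_to
        (g := fun x : Fin (T+1) → ι => x t.castSucc) (t := univ)
        (fun x _ => mem_univ _) (fun x => PSM_A W khat t.succ x),
      hΦf t i]
    refine sum_congr rfl fun j _ => ?_
    have hset : (univ.filter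
          (fun x : Fin (T+1) → ι => x t.succ = i ∧ ∀ s, t.succ < s → x s = y s)).filter
          (fun x => x t.castSucc = j)
        = univ.filter (fun x : Fin (T+1) → ι =>
            x t.castSucc = j ∧ ∀ s, t.castSucc < s → x s = Function.update y t.succ i s) := by
      ext x
      simp only [mem_filter, mem_univ, true_and]
      constructor
      · rintro ⟨⟨hts, hup⟩, htc⟩
        refine ⟨htc, fun s hs => ?_⟩
        rcases eq_or_ne s t.succ with rfl | hne
        · rw [Function.update_self]; exact hts
        · rw [Function.update_of_ne hne]
          refine hup s ?_
          have h2 : (s : ℕ) ≠ (t.succ : ℕ) := fun h => hne (Fin.ext h)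
          have h1 : (t.castSucc : ℕ) < (s : ℕ) := hs
          simp only [Fin.lt_def, Fin.val_succ, Fin.coe_castSucc] at *
          omega
      · rintro ⟨htc, hup⟩
        have hts : x t.succ = i := by
          have := hup t.succ (Fin.castSucc_lt_succ : t.castSucc < t.succ)
          rwa [Function.update_self] at this
        refine ⟨⟨hts, fun s hs => ?_⟩, htc⟩
        have hne : s ≠ t.succ := fun h => by subst h; exact absurd hs (lt_irrefl _)
        have := hup s (lt_trans (Fin.castSucc_lt_succ : t.castSucc < t.succ) hs)
        rwa [Function.update_of_ne hne] at this
    rw [hset]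
    have hcongr : ∀ x ∈ univ.filter (fun x : Fin (T+1) → ι =>
          x t.castSucc = j ∧ ∀ s, t.castSucc < s → x s = Function.update y t.succ i s),
        PSM_A W khat t.succ x
          = PSM_A W khat t.castSucc x * (W t.castSucc j * khat j i) := by
      intro x hx
      simp only [mem_filter, mem_univ, true_and] at hx
      obtain ⟨h1, h2⟩ := hx
      have h3 : x t.succ = i := by
        have := h2 t.succ (Fin.castSucc_lt_succ : t.castSucc < t.succ)
        rwa [Function.update_self] at this
      rw [hA x, h1, h3]
    rw [sum_congr rfl hcongr, ← sum_mul, ih j (Function.update y t.succ i)]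
    ring

private lemma PSM_bwd (W : Fin (T+1) → ι → ℝ) (khat : ι → ι → ℝ)
    (Φb : Fin (T+1) → ι → ℝ) (hΦbT : ∀ i, Φb (Fin.last T) i = 1)
    (hΦb : ∀ t : Fin T, ∀ i,
      Φb t.castSucc i = ∑ j, Φb t.succ j * W t.succ j * khat i j) :
    ∀ τ : Fin (T+1), ∀ (i : ι) (y : Fin (T+1) → ι),
      (∑ x ∈ univ.filter
          (fun x : Fin (T+1) → ι => x τ = i ∧ ∀ s, s < τ → x s = y s),
        PSM_B W khat τ x) = Φb τ i := by
  intro τ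
  induction τ using Fin.reverseInduction with
  | last =>
    intro i y
    have hset : univ.filter
        (fun x : Fin (T+1) → ι => x (Fin.last T) = i ∧ ∀ s, s < Fin.last T → x s = y s)
        = {Function.update y (Fin.last T) i} := by
      ext x
      simp only [mem_filter, mem_univ, true_and, mem_singleton]
      constructor
      · rintro ⟨h0, hs⟩
        funext s
        rcases eq_or_ne s (Fin.last T) with rfl | hne
        · rw [Function.update_self]; exact h0
        · rw [Function.update_of_ne hne]
          exact hs s (lt_of_le_of_ne (Fin.le_last s) hne)
      · rintro rfl
        refine ⟨Function.update_self _ _ _, fun s hs => ?_⟩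
        rw [Function.update_of_ne hs.ne]
    rw [hset, sum_singleton, hΦbT]
    have h1 : univ.filter (fun t : Fin (T+1) => Fin.last T < t) = ∅ := by
      ext t
      simp only [mem_filter, mem_univ, true_and, notMem_empty, iff_false, Fin.lt_def,
        Fin.val_last]
      omega
    have h2 : univ.filter (fun t : Fin T => Fin.last T ≤ t.castSucc) = ∅ := by
      ext t
      simp only [mem_filter, mem_univ, true_and, notMem_empty, iff_false, Fin.le_def,
        Fin.val_last, Fin.coe_castSucc]
      omega
    rw [PSM_B, h1, h2, prod_empty, prod_empty, mul_one]
  | cast t ih =>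
    intro i y
    have hB : ∀ x : Fin (T+1) → ι, PSM_B W khat t.castSucc x
        = PSM_B W khat t.succ x *
          (W t.succ (x t.succ) * khat (x t.castSucc) (x t.succ)) := by
      intro x
      have e1 : univ.filter (fun s : Fin (T+1) => t.castSucc < s)
          = insert t.succ (univ.filter (fun s : Fin (T+1) => t.succ < s)) := by
        ext s
        simp only [mem_filter, mem_univ, true_and, mem_insert, Fin.lt_def, Fin.ext_iff,
          Fin.coe_castSucc, Fin.val_succ]
        omega
      have e2 : univ.filter (fun s : Fin T => t.castSucc ≤ s.castSucc)
          = insert t (univ.filter (fun s : Fin T => t.succ ≤ s.castSucc)) := by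
        ext s
        simp only [mem_filter, mem_univ, true_and, mem_insert, Fin.le_def, Fin.ext_iff,
          Fin.coe_castSucc, Fin.val_succ]
        omega
      have h1 : t.succ ∉ univ.filter (fun s : Fin (T+1) => t.succ < s) := by simp
      have h2 : t ∉ univ.filter (fun s : Fin T => t.succ ≤ s.castSucc) := by
        simp only [mem_filter, mem_univ, true_and, Fin.le_def, Fin.coe_castSucc, Fin.val_succ]
        omega
      rw [PSM_B, PSM_B, e1, e2, prod_insert h1, prod_insert h2]
      ring
    rw [← Finset.sum_fiberwise_of_maps_to
        (g := fun x : Fin (T+1) → ι => x t.succ) (t := univ)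
        (fun x _ => mem_univ _) (fun x => PSM_B W khat t.castSucc x),
      hΦb t i]
    refine sum_congr rfl fun j _ => ?_
    have hset : (univ.filter
          (fun x : Fin (T+1) → ι => x t.castSucc = i ∧ ∀ s, s < t.castSucc → x s = y s)).filter
          (fun x => x t.succ = j)
        = univ.filter (fun x : Fin (T+1) → ι =>
            x t.succ = j ∧ ∀ s, s < t.succ → x s = Function.update y t.castSucc i s) := by
      ext x
      simp only [mem_filter, mem_univ, true_and]
      constructor
      · rintro ⟨⟨htc, hup⟩, hts⟩
        refine ⟨hts, fun s hs => ?_⟩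
        rcases eq_or_ne s t.castSucc with rfl | hne
        · rw [Function.update_self]; exact htc
        · rw [Function.update_of_ne hne]
          refine hup s ?_
          have h2 : (s : ℕ) ≠ (t.castSucc : ℕ) := fun h => hne (Fin.ext h)
          have h1 : (s : ℕ) < (t.succ : ℕ) := hs
          simp only [Fin.lt_def, Fin.val_succ, Fin.coe_castSucc] at *
          omega
      · rintro ⟨hts, hup⟩
        have htc : x t.castSucc = i := by
          have := hup t.castSucc (Fin.castSucc_lt_succ : t.castSucc < t.succ)
          rwa [Function.update_self] at this
        refine ⟨⟨htc, fun s hs => ?_⟩, hts⟩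
        have hne : s ≠ t.castSucc := fun h => by subst h; exact absurd hs (lt_irrefl _)
        have := hup s (lt_trans hs (Fin.castSucc_lt_succ : t.castSucc < t.succ))
        rwa [Function.update_of_ne hne] at this
    rw [hset]
    have hcongr : ∀ x ∈ univ.filter (fun x : Fin (T+1) → ι =>
          x t.succ = j ∧ ∀ s, s < t.succ → x s = Function.update y t.castSucc i s),
        PSM_B W khat t.castSucc x
          = PSM_B W khat t.succ x * (W t.succ j * khat i j) := by
      intro x hx
      simp only [mem_filter, mem_univ, true_and] at hx
      obtain ⟨h1, h2⟩ := hx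
      have h3 : x t.castSucc = i := by
        have := h2 t.castSucc (Fin.castSucc_lt_succ : t.castSucc < t.succ)
        rwa [Function.update_self] at this
      rw [hB x, h1, h3]
    rw [sum_congr rfl hcongr, ← sum_mul, ih j (Function.update y t.castSucc i)]
    ring

end PSM_aux

theorem path_structured_marginal (T : ℕ) (ι : Type*) [Fintype ι] [DecidableEq ι]
    (k : Fin (T + 1) → ι → ℝ) (khat : ι → ι → ℝ) (u : Fin (T + 1) → ι → ℝ)
    (hk : ∀ t i, 0 ≤ k t i) (hkhat : ∀ i j, 0 ≤ khat i j) (hu : ∀ t i, 0 < u t i)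
    (K M : (Fin (T + 1) → ι) → ℝ)
    (hK : ∀ x, K x = (∏ t, k t (x t)) * ∏ t : Fin T, khat (x t.castSucc) (x t.succ))
    (hM : ∀ x, M x = K x * ∏ t, u t (x t))
    (Φf Φb : Fin (T + 1) → ι → ℝ)
    (hΦf0 : ∀ i, Φf 0 i = 1)
    (hΦf : ∀ t : Fin T, ∀ i,
      Φf t.succ i = ∑ j, Φf t.castSucc j * k t.castSucc j * khat j i * u t.castSucc j)
    (hΦbT : ∀ i, Φb (Fin.last T) i = 1)
    (hΦb : ∀ t : Fin T, ∀ i,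
      Φb t.castSucc i = ∑ j, Φb t.succ j * k t.succ j * khat i j * u t.succ j) :
    ∀ (τ : Fin (T + 1)) (i : ι),
      (∑ x ∈ Finset.univ.filter (fun x : Fin (T + 1) → ι => x τ = i), M x)
        = Φf τ i * k τ i * u τ i * Φb τ i := by
  intro τ i
  set W : Fin (T + 1) → ι → ℝ := fun t j => k t j * u t j with hWdef
  -- M factorizes through PSM_A, weight at τ, PSM_B
  have hMfac : ∀ x : Fin (T + 1) → ι,
      M x = PSM_A W khat τ x * W τ (x τ) * PSM_B W khat τ x := by
    intro x
    have hw : (∏ t, k t (x t)) * (∏ t, u t (x t)) = ∏ t, W t (x t) := by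
      rw [← prod_mul_distrib]
    have hwsplit : (∏ t, W t (x t))
        = (∏ t ∈ univ.filter (fun t : Fin (T+1) => t < τ), W t (x t)) * W τ (x τ) *
          ∏ t ∈ univ.filter (fun t : Fin (T+1) => τ < t), W t (x t) := by
      rw [← prod_filter_mul_prod_filter_not univ (fun t : Fin (T+1) => t < τ) (fun t => W t (x t))]
      have e : univ.filter (fun t : Fin (T+1) => ¬ t < τ)
          = insert τ (univ.filter (fun t : Fin (T+1) => τ < t)) := by
        ext s
        simp only [mem_filter, mem_univ, true_and, mem_insert, Fin.lt_def, Fin.ext_iff, not_lt]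
        omega
      rw [e, prod_insert (by simp)]
      ring
    have hlsplit : (∏ t : Fin T, khat (x t.castSucc) (x t.succ))
        = (∏ t ∈ univ.filter (fun t : Fin T => t.castSucc < τ), khat (x t.castSucc) (x t.succ)) *
          ∏ t ∈ univ.filter (fun t : Fin T => τ ≤ t.castSucc), khat (x t.castSucc) (x t.succ) := by
      rw [← prod_filter_mul_prod_filter_not univ (fun t : Fin T => t.castSucc < τ)
        (fun t => khat (x t.castSucc) (x t.succ))]
      congr 1
      refine prod_congr ?_ fun _ _ => rfl
      ext s
      simp only [mem_filter, mem_univ, true_and, not_lt]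
    rw [hM x, hK x, PSM_A, PSM_B]
    calc ((∏ t, k t (x t)) * ∏ t : Fin T, khat (x t.castSucc) (x t.succ)) * ∏ t, u t (x t)
        = ((∏ t, k t (x t)) * ∏ t, u t (x t)) * ∏ t : Fin T, khat (x t.castSucc) (x t.succ) := by
          ring
      _ = _ := by rw [hw, hwsplit, hlsplit]; ring
  -- forward and backward lemmas with rearranged recursions
  have hfwd := PSM_fwd W khat Φf hΦf0 (fun t i => by
    rw [hΦf t i]; exact sum_congr rfl fun j _ => by simp only [hWdef]; ring)
  have hbwd := PSM_bwd W khat Φb hΦbT (fun t i => by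
    rw [hΦb t i]; exact sum_congr rfl fun j _ => by simp only [hWdef]; ring)
  -- fiberwise decomposition of the marginal fiber by the upper template
  set g : (Fin (T + 1) → ι) → (Fin (T + 1) → ι) :=
    fun x s => if τ < s then x s else i with hgdef
  set F : Finset (Fin (T + 1) → ι) :=
    Finset.univ.filter (fun x : Fin (T + 1) → ι => x τ = i) with hFdef
  have himg : ∀ x ∈ F, g x ∈ F.image g := fun x hx => mem_image_of_mem g hx
  rw [← Finset.sum_fiberwise_of_maps_to himg M]
  -- identify the image
  have himage : F.image g
      = univ.filter (fun y : Fin (T + 1) → ι => y τ = i ∧ ∀ s, s < τ → y s = i) := by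
    ext y
    simp only [mem_image, hFdef, mem_filter, mem_univ, true_and]
    constructor
    · rintro ⟨x, hx, rfl⟩
      refine ⟨by simp [hgdef], fun s hs => by simp [hgdef, not_lt.mpr hs.le]⟩
    · rintro ⟨h1, h2⟩
      refine ⟨y, h1, ?_⟩
      funext s
      simp only [hgdef]
      split_ifs with h
      · rfl
      · rcases eq_or_lt_of_le (not_lt.mp h) with rfl | hlt
        · exact h1.symm
        · exact (h2 s hlt).symm
  -- inner fibers
  have hfiber : ∀ y ∈ F.image g, F.filter (fun x => g x = y)
      = univ.filter (fun x : Fin (T + 1) → ι => x τ = i ∧ ∀ s, τ < s → x s = y s) := by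
    intro y hy
    rw [himage] at hy
    simp only [mem_filter, mem_univ, true_and] at hy
    obtain ⟨hyτ, hylt⟩ := hy
    ext x
    simp only [hFdef, mem_filter, mem_univ, true_and]
    constructor
    · rintro ⟨hxτ, rfl⟩
      exact ⟨hxτ, fun s hs => by simp [hgdef, hs]⟩
    · rintro ⟨hxτ, hup⟩
      refine ⟨hxτ, ?_⟩
      funext s
      simp only [hgdef]
      split_ifs with h
      · exact hup s h
      · rcases eq_or_lt_of_le (not_lt.mp h) with rfl | hlt
        · exact hyτ.symm
        · exact (hylt s hlt).symm
  calc ∑ y ∈ F.image g, ∑ x ∈ F.filter (fun x => g x = y), M x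
      = ∑ y ∈ F.image g, Φf τ i * W τ i * PSM_B W khat τ y := by
        refine sum_congr rfl fun y hy => ?_
        rw [hfiber y hy]
        have hBy : ∀ x ∈ univ.filter
            (fun x : Fin (T + 1) → ι => x τ = i ∧ ∀ s, τ < s → x s = y s),
            M x = PSM_A W khat τ x * (W τ i * PSM_B W khat τ y) := by
          intro x hx
          simp only [mem_filter, mem_univ, true_and] at hx
          obtain ⟨h1, h2⟩ := hx
          have hyτ : y τ = i := by
            rw [himage] at hy
            simp only [mem_filter, mem_univ, true_and] at hy
            exact hy.1
          have hBeq : PSM_B W khat τ x = PSM_B W khat τ y := by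
            refine PSM_B_congr W khat τ fun s hs => ?_
            rcases eq_or_lt_of_le hs with rfl | hlt
            · rw [h1, hyτ]
            · exact h2 s hlt
          rw [hMfac x, h1, hBeq]
          ring
        rw [sum_congr rfl hBy, ← sum_mul, hfwd τ i y]
        ring
    _ = Φf τ i * W τ i * ∑ y ∈ F.image g, PSM_B W khat τ y := by
        rw [← mul_sum]
    _ = Φf τ i * k τ i * u τ i * Φb τ i := by
        have : F.image g
            = univ.filter (fun y : Fin (T + 1) → ι => y τ = i ∧ ∀ s, s < τ → y s = (fun _ => i) s) := by
          rw [himage]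
        rw [this, hbwd τ i (fun _ => i)]
        simp only [hWdef]
        ring
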